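/- Let G be a Polish group with rk(G) ≤ α and let X be a Polish G-space. If x, y ∈ X satisfy x ⇝^β_G y for every β < α, then x ∼^1_G y. -/

import Mathlib

universe u v w x

/-- The conjugate `g W g⁻¹` of a subset `W` of a group by the element `g`. -/
def conjSet {G : Type u} [Group G] (g : G) (W : Set G) : Set G :=
  (fun x => g * x * g⁻¹) '' W

/-- `RkLe V U β` asserts that the ordinal rank `rk(V, U)` is at most `β`:
either `U ⊆ V` (rank `0`), or there is an open identity neighbourhood `W`
such that `rk(V, g W g⁻¹) < β` for every `g ∈ U`. -/
def RkLe {G : Type u} [Group G] [TopologicalSpace G] (V U : Set G) (β : Ordinal.{v}) : Prop :=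
  U ⊆ V ∨ ∃ W : Set G, IsOpen W ∧ (1 : G) ∈ W ∧
    ∀ g ∈ U, ∃ γ : Ordinal.{v}, ∃ _ : γ < β, RkLe V (conjSet g W) γ
termination_by β

/-- `rk(G) ≤ α`, i.e. the topological group `G` is `α`-balanced:
`rk(V, G) + 1 ≤ α` for every open identity neighbourhood `V`. -/
def IsBalanced (G : Type u) [Group G] [TopologicalSpace G] (α : Ordinal.{v}) : Prop :=
  ∀ V : Set G, IsOpen V → (1 : G) ∈ V → ∃ β : Ordinal.{v}, β < α ∧ RkLe V Set.univ β

/-- `rk(G) = α`: the least `α` such that `G` is `α`-balanced. -/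
def HasRk (G : Type u) [Group G] [TopologicalSpace G] (α : Ordinal.{v}) : Prop :=
  IsBalanced G α ∧ ∀ β : Ordinal.{v}, β < α → ¬IsBalanced G β

/-- The relation `x ⇝^α_V y` on a `G`-space `X`. -/
def Squig {G : Type u} {X : Type w} [Group G] [TopologicalSpace G] [TopologicalSpace X]
    [MulAction G X] (V : Set G) (α : Ordinal.{v}) (x y : X) : Prop :=
  (α = 0 → x ∈ closure ((· • y) '' V) ∧ y ∈ closure ((· • x) '' V)) ∧
  (0 < α → ∀ (W : Set G) (U : Set X), IsOpen W → (1 : G) ∈ W → IsOpen U → (x ∈ U ∨ y ∈ U) →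
    ∃ gx ∈ V, ∃ gy ∈ V, gx • x ∈ U ∧ gy • y ∈ U ∧
      ∀ β : Ordinal.{v}, ∀ _ : β < α, Squig W β (gx • x) (gy • y))
termination_by α

/-- The relation `x ⪯^α_V y` on a `G`-space: `x ⪯^0_V y` iff `x ∈ cl(V • y)`, and for
`α > 0`, `x ⪯^α_V y` iff for every open identity neighbourhood `W` there is `v ∈ V`
with `v • y ∼^β_W x` for all `β < α`. -/
def PrecEq {G : Type u} {X : Type w} [Group G] [TopologicalSpace G] [TopologicalSpace X]
    [MulAction G X] (V : Set G) (α : Ordinal.{v}) (x y : X) : Prop :=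
  (α = 0 → x ∈ closure ((· • y) '' V)) ∧
  (0 < α → ∀ W : Set G, IsOpen W → (1 : G) ∈ W → ∃ v ∈ V,
    ∀ β : Ordinal.{v}, ∀ _ : β < α, PrecEq W β (v • y) x ∧ PrecEq W β x (v • y))
termination_by α

/-- The relation `x ∼^α_V y`: both `x ⪯^α_V y` and `y ⪯^α_V x`. -/
def SimEq {G : Type u} {X : Type w} [Group G] [TopologicalSpace G] [TopologicalSpace X]
    [MulAction G X] (V : Set G) (α : Ordinal.{v}) (x y : X) : Prop :=
  PrecEq V α x y ∧ PrecEq V α y x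


open Pointwise

section Aux
variable {G : Type u} {X : Type w} [Group G] [TopologicalSpace G] [IsTopologicalGroup G]
  [TopologicalSpace X] [MulAction G X] [ContinuousSMul G X]

omit [TopologicalSpace G] [IsTopologicalGroup G] in
theorem conjSet_eq_preimage (g : G) (W : Set G) :
    conjSet g W = (fun y => g⁻¹ * y * g) ⁻¹' W := by
  ext z
  constructor
  · rintro ⟨w, hw, rfl⟩
    simpa [mul_assoc] using hw
  · intro hz
    exact ⟨g⁻¹ * z * g, hz, by group⟩

theorem conjSet_isOpen (g : G) {W : Set G} (hW : IsOpen W) : IsOpen (conjSet g W) := by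
  rw [conjSet_eq_preimage]
  exact hW.preimage (by continuity)

omit [TopologicalSpace G] [IsTopologicalGroup G] in
theorem one_mem_conjSet (g : G) {W : Set G} (hW : (1 : G) ∈ W) : (1 : G) ∈ conjSet g W := by
  rw [conjSet_eq_preimage]
  simpa using hW

omit [TopologicalSpace G] [IsTopologicalGroup G] in
theorem conjSet_conjSet (g : G) (W : Set G) : conjSet g (conjSet g⁻¹ W) = W := by
  rw [conjSet_eq_preimage, conjSet_eq_preimage]
  ext z; simp [mul_assoc]

omit [TopologicalSpace G] [IsTopologicalGroup G] in
theorem conjSet_mono (g : G) {W W' : Set G} (h : W ⊆ W') : conjSet g W ⊆ conjSet g W' :=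
  Set.image_mono h

theorem squig_smul (β : Ordinal.{v}) : ∀ (W : Set G) (x y : X) (h : G),
    Squig W β x y → Squig (conjSet h W) β (h • x) (h • y) := by
  induction β using Ordinal.induction with
  | _ β IH =>
    intro W x y h hsq
    rw [Squig] at hsq ⊢
    constructor
    · rintro rfl
      obtain ⟨h1, h2⟩ := hsq.1 rfl
      have key : ∀ (a b : X), a ∈ closure ((· • b) '' W) →
          h • a ∈ closure ((· • (h • b)) '' conjSet h W) := by
        intro a b hab
        have hset : ((· • (h • b)) '' conjSet h W) = h • ((· • b) '' W) := by
          simp only [conjSet, ← Set.image_smul, Set.image_image]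
          apply Set.image_congr'
          intro w
          simp [smul_smul, mul_assoc]
        rw [hset, closure_smul]
        exact Set.smul_mem_smul_set hab
      exact ⟨key x y h1, key y x h2⟩
    · intro hβ W1 U1 hW1o hW11 hU1o hmem
      obtain ⟨gx, hgx, gy, hgy, hgxU, hgyU, hrec⟩ :=
        hsq.2 hβ (conjSet h⁻¹ W1) ((h • ·) ⁻¹' U1) (conjSet_isOpen _ hW1o)
          (one_mem_conjSet _ hW11) (hU1o.preimage (continuous_const_smul h))
          (by simpa using hmem)
      refine ⟨h * gx * h⁻¹, ⟨gx, hgx, rfl⟩, h * gy * h⁻¹, ⟨gy, hgy, rfl⟩, ?_, ?_, ?_⟩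
      · have : (h * gx * h⁻¹) • h • x = h • gx • x := by
          simp [smul_smul, mul_assoc]
        rw [this]; exact hgxU
      · have : (h * gy * h⁻¹) • h • y = h • gy • y := by
          simp [smul_smul, mul_assoc]
        rw [this]; exact hgyU
      · intro γ hγ
        have := IH γ hγ (conjSet h⁻¹ W1) (gx • x) (gy • y) h (hrec γ hγ)
        rw [conjSet_conjSet] at this
        have e1 : (h * gx * h⁻¹) • h • x = h • gx • x := by simp [smul_smul, mul_assoc]
        have e2 : (h * gy * h⁻¹) • h • y = h • gy • y := by simp [smul_smul, mul_assoc]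
        rw [e1, e2]
        exact this

omit [IsTopologicalGroup G] [ContinuousSMul G X] in
theorem squig_symm (β : Ordinal.{v}) : ∀ (W : Set G) (x y : X),
    Squig W β x y → Squig W β y x := by
  induction β using Ordinal.induction with
  | _ β IH =>
    intro W x y hsq
    rw [Squig] at hsq ⊢
    refine ⟨fun h0 => (hsq.1 h0).symm, ?_⟩
    intro hβ W1 U1 hW1o hW11 hU1o hmem
    obtain ⟨gx, hgx, gy, hgy, hgxU, hgyU, hrec⟩ :=
      hsq.2 hβ W1 U1 hW1o hW11 hU1o hmem.symm
    exact ⟨gy, hgy, gx, hgx, hgyU, hgxU, fun γ hγ => IH γ hγ _ _ _ (hrec γ hγ)⟩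

omit [IsTopologicalGroup G] [ContinuousSMul G X] in
theorem squig_closure (β : Ordinal.{v}) (W : Set G) (x y : X) (hsq : Squig W β x y) :
    x ∈ closure ((· • y) '' W) ∧ y ∈ closure ((· • x) '' W) := by
  rw [Squig] at hsq
  rcases eq_or_ne β 0 with rfl | hne
  · exact hsq.1 rfl
  · have hβ : 0 < β := pos_iff_ne_zero.2 hne
    constructor
    · rw [mem_closure_iff]
      intro o ho hxo
      obtain ⟨gx, hgx, gy, hgy, hgxU, hgyU, -⟩ :=
        hsq.2 hβ Set.univ o isOpen_univ trivial ho (Or.inl hxo)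
      exact ⟨gy • y, hgyU, ⟨gy, hgy, rfl⟩⟩
    · rw [mem_closure_iff]
      intro o ho hyo
      obtain ⟨gx, hgx, gy, hgy, hgxU, hgyU, -⟩ :=
        hsq.2 hβ Set.univ o isOpen_univ trivial ho (Or.inr hyo)
      exact ⟨gx • x, hgxU, ⟨gx, hgx, rfl⟩⟩

omit [IsTopologicalGroup G] [TopologicalSpace X] [MulAction G X] [ContinuousSMul G X] in
theorem rkLe_mono {V U U' : Set G} {β : Ordinal.{v}} (h : RkLe V U β) (hsub : U' ⊆ U) :
    RkLe V U' β := by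
  rw [RkLe] at h ⊢
  rcases h with h | ⟨W, hWo, hW1, hW⟩
  · exact Or.inl (hsub.trans h)
  · exact Or.inr ⟨W, hWo, hW1, fun g hg => hW g (hsub hg)⟩

theorem main_lemma (β : Ordinal.{v}) : ∀ (V U : Set G) (x y : X),
    (∀ g ∈ U, g⁻¹ ∈ U) → RkLe V U β → Squig U β x y →
    ∃ g : G, (g • y) ∈ closure ((· • x) '' V) ∧ x ∈ closure ((· • (g • y)) '' V) := by
  induction β using Ordinal.induction with
  | _ β IH =>
    intro V U x y hUsymm hrk hsq
    rw [RkLe] at hrk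
    rcases hrk with hsub | ⟨W, hWo, hW1, hW⟩
    · obtain ⟨h1, h2⟩ := squig_closure β U x y hsq
      refine ⟨1, ?_, ?_⟩
      · rw [one_smul]
        exact closure_mono (Set.image_mono hsub) h2
      · rw [one_smul]
        exact closure_mono (Set.image_mono hsub) h1
    · rcases eq_or_ne β 0 with rfl | hne
      · -- then U must be empty, contradiction with squig_closure
        by_cases hU : (U : Set G).Nonempty
        · obtain ⟨g, hg⟩ := hU
          obtain ⟨γ, hγ, -⟩ := hW g hg
          exact absurd hγ (not_lt_zero (a := γ))
        · rw [Set.not_nonempty_iff_eq_empty] at hU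
          subst hU
          obtain ⟨h1, -⟩ := squig_closure 0 ∅ x y hsq
          simp at h1
      · have hβ : 0 < β := pos_iff_ne_zero.2 hne
        set W2 : Set G := W ∩ W⁻¹ with hW2def
        have hW2o : IsOpen W2 := hWo.inter hWo.inv
        have hW21 : (1 : G) ∈ W2 := ⟨hW1, by simpa using hW1⟩
        have hW2sub : W2 ⊆ W := Set.inter_subset_left
        have hW2symm : ∀ g ∈ W2, g⁻¹ ∈ W2 := by
          rintro g ⟨hg1, hg2⟩
          exact ⟨hg2, by simpa using hg1⟩
        rw [Squig] at hsq
        obtain ⟨gx, hgx, gy, hgy, -, -, hrec⟩ :=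
          hsq.2 hβ W2 Set.univ hW2o hW21 isOpen_univ (Or.inl trivial)
        have hgxi : gx⁻¹ ∈ U := hUsymm gx hgx
        obtain ⟨γ, hγ, hrk'⟩ := hW gx⁻¹ hgxi
        have hrk2 : RkLe V (conjSet gx⁻¹ W2) γ :=
          rkLe_mono hrk' (conjSet_mono _ hW2sub)
        have hsymm2 : ∀ g ∈ conjSet gx⁻¹ W2, g⁻¹ ∈ conjSet gx⁻¹ W2 := by
          rintro g ⟨w, hw, rfl⟩
          exact ⟨w⁻¹, hW2symm w hw, by group⟩
        have hsq2 : Squig (conjSet gx⁻¹ W2) γ x (gx⁻¹ • gy • y) := by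
          have := squig_smul γ W2 (gx • x) (gy • y) gx⁻¹ (hrec γ hγ)
          rwa [inv_smul_smul] at this
        obtain ⟨g, hg1, hg2⟩ := IH γ hγ V (conjSet gx⁻¹ W2) x (gx⁻¹ • gy • y)
          hsymm2 hrk2 hsq2
        refine ⟨g * gx⁻¹ * gy, ?_, ?_⟩
        · have e : (g * gx⁻¹ * gy) • y = g • gx⁻¹ • gy • y := by
            simp [smul_smul, mul_assoc]
          rw [e]; exact hg1
        · have e : (g * gx⁻¹ * gy) • y = g • gx⁻¹ • gy • y := by
            simp [smul_smul, mul_assoc]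
          rw [e]; exact hg2

end Aux

/-- If `G` is an `α`-balanced Polish group acting on a Polish space `X` and
`x ⇝^β_G y` holds for all `β < α`, then `x ∼^1_G y`. -/
theorem simEq_of_squig_of_isBalanced {G : Type u} {X : Type w}
    [Group G] [TopologicalSpace G] [IsTopologicalGroup G] [PolishSpace G]
    [TopologicalSpace X] [PolishSpace X] [MulAction G X] [ContinuousSMul G X]
    (α : Ordinal.{v}) (hbal : IsBalanced G α) (x y : X)
    (h : ∀ β : Ordinal.{v}, β < α → Squig (Set.univ : Set G) β x y) :
    SimEq (Set.univ : Set G) (1 : Ordinal.{v}) x y := by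
  constructor
  · rw [PrecEq]
    refine ⟨fun h0 => absurd h0 one_ne_zero, ?_⟩
    intro _ W hWo hW1
    obtain ⟨β, hβ, hrk⟩ := hbal W hWo hW1
    obtain ⟨g, h1, h2⟩ := main_lemma β W Set.univ x y (fun g _ => trivial) hrk (h β hβ)
    refine ⟨g, trivial, ?_⟩
    intro γ hγ
    rw [Ordinal.lt_one_iff_zero] at hγ
    subst hγ
    constructor
    · rw [PrecEq]
      exact ⟨fun _ => h1, fun h0 => absurd h0 (lt_irrefl 0)⟩
    · rw [PrecEq]
      exact ⟨fun _ => h2, fun h0 => absurd h0 (lt_irrefl 0)⟩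
  · rw [PrecEq]
    refine ⟨fun h0 => absurd h0 one_ne_zero, ?_⟩
    intro _ W hWo hW1
    obtain ⟨β, hβ, hrk⟩ := hbal W hWo hW1
    obtain ⟨g, h1, h2⟩ := main_lemma β W Set.univ y x (fun g _ => trivial) hrk
      (squig_symm β _ x y (h β hβ))
    refine ⟨g, trivial, ?_⟩
    intro γ hγ
    rw [Ordinal.lt_one_iff_zero] at hγ
    subst hγ
    constructor
    · rw [PrecEq]
      exact ⟨fun _ => h1, fun h0 => absurd h0 (lt_irrefl 0)⟩
    · rw [PrecEq]
      exact ⟨fun _ => h2, fun h0 => absurd h0 (lt_irrefl 0)⟩
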